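/- The open disk {w ∈ ℂ : |w − 5/4| < 1} is contained in the image φ(D) of the open unit disk D under φ(z) = (1 + z/2)². -/

import Mathlib

theorem ball_subset_phi_image :
    Metric.ball ((5 : ℂ) / 4) 1 ⊆ (fun z : ℂ => (1 + z / 2) ^ 2) '' Metric.ball (0 : ℂ) 1 := by
  intro w hw
  rw [Metric.mem_ball, Complex.dist_eq] at hw
  have hw0 : w ≠ 0 := by
    rintro rfl
    rw [zero_sub, norm_neg] at hw
    norm_num at hw
  set u := Complex.exp (Complex.log w / 2) with hu
  have hu2 : u ^ 2 = w := by
    rw [hu, ← Complex.exp_nat_mul]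
    rw [show (2 : ℕ) * (Complex.log w / 2) = Complex.log w by push_cast; ring]
    exact Complex.exp_log hw0
  have ha : 0 ≤ u.re := by
    rw [hu, Complex.exp_re]
    apply mul_nonneg (Real.exp_nonneg _)
    apply Real.cos_nonneg_of_mem_Icc
    constructor
    · simp only [Complex.div_im, Complex.log_im]
      norm_num
      nlinarith [Complex.neg_pi_lt_arg w, Real.pi_pos]
    · simp only [Complex.div_im, Complex.log_im]
      norm_num
      nlinarith [Complex.arg_le_pi w, Real.pi_pos]
  have hre : w.re = u.re ^ 2 - u.im ^ 2 := by
    rw [← hu2]; simp [pow_two, Complex.mul_re]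
  have him : w.im = 2 * u.re * u.im := by
    rw [← hu2]; simp [pow_two, Complex.mul_im]; ring
  have hw' : (u.re^2 - u.im^2 - 5/4)^2 + (2*u.re*u.im)^2 < 1 := by
    have h1 : ‖w - 5/4‖ ^ 2 < 1 := by nlinarith [norm_nonneg (w - 5/4)]
    rw [Complex.sq_norm, Complex.normSq_apply] at h1
    simp only [Complex.sub_re, Complex.sub_im] at h1
    have e1 : ((5:ℂ)/4).re = 5/4 := by norm_num
    have e2 : ((5:ℂ)/4).im = 0 := by norm_num
    rw [e1, e2, hre, him] at h1
    nlinarith [h1]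
  have key : (u.re - 1)^2 + u.im^2 < 1/4 := by
    nlinarith [sq_nonneg (u.re^2+u.im^2-1), sq_nonneg u.im, sq_nonneg (u.re-1),
      sq_nonneg (2*u.re - (u.re^2+u.im^2) - 3/4), sq_nonneg u.re,
      mul_nonneg ha (sq_nonneg u.im)]
  refine ⟨2 * (u - 1), ?_, ?_⟩
  · rw [Metric.mem_ball, Complex.dist_eq, sub_zero]
    have : ‖u - 1‖ < 1/2 := by
      rw [Complex.norm_def, Complex.normSq_apply]
      rw [show ((1:ℝ)/2) = Real.sqrt (1/4) by rw [show (1:ℝ)/4 = (1/2)^2 by norm_num, Real.sqrt_sq]; norm_num]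
      apply Real.sqrt_lt_sqrt (by nlinarith [sq_nonneg (u.re-1), sq_nonneg u.im])
      simp only [Complex.sub_re, Complex.sub_im, Complex.one_re, Complex.one_im]
      nlinarith [key]
    calc ‖2 * (u - 1)‖ = 2 * ‖u - 1‖ := by simp [map_mul]
    _ < 1 := by linarith
  · show (1 + 2 * (u - 1) / 2) ^ 2 = w
    rw [← hu2]; ring
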